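/- arXiv:1008.4167 — 2 statements merged into one kernel-verified Lean document; each statement's English description precedes it below -/
import Mathlib

section
/- Let β > 1 be a real number and let a be the β-expansion of β. Then W(β) is exactly the set of words w such that B̄(w) ≤ β and σ^k w ≠ a for every k ≥ 0. Moreover, for every word w that is not identically zero, B̄(w) = inf{β > 1 : w ∈ W(β)}. -/
/-- The shift map iterated `k` times: `(shift k w) i = w (i + k)`,
so `shift k w = w_k w_{k+1} w_{k+2} …`. -/
def shift (k : ℕ) (w : ℕ → ℕ) : ℕ → ℕ := fun i => w (i + k)

/-- Strict lexicographic order on infinite words: `v < w` iff there is an index `i`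
with `v j = w j` for all `j < i` and `v i < w i`. -/
def LexLt (v w : ℕ → ℕ) : Prop := ∃ i, (∀ j < i, v j = w j) ∧ v i < w i

/-- Weak lexicographic order: `v ≤ w` iff `v < w` or `v = w`. -/
def LexLe (v w : ℕ → ℕ) : Prop := LexLt v w ∨ v = w

/-- A word is a bounded sequence of natural numbers. -/
def IsWord (w : ℕ → ℕ) : Prop := ∃ M, ∀ i, w i ≤ M

/-- `fword w β = ∑_{i ≥ 0} w_i β^{-(i+1)} = w_0/β + w_1/β² + …`. -/
noncomputable def fword (w : ℕ → ℕ) (β : ℝ) : ℝ := ∑' i : ℕ, (w i : ℝ) / β ^ (i + 1)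

open Classical in
/-- `B̂(w)`: zero for the zero word, and otherwise `inf {β > 1 : f_w(β) ≤ 1}`. -/
noncomputable def Bhat (w : ℕ → ℕ) : ℝ :=
  if w = fun _ => 0 then 0 else sInf {β : ℝ | 1 < β ∧ fword w β ≤ 1}

/-- `B̄(w) = sup_{j ≥ 0} B̂(σ^j w)`. -/
noncomputable def Bbar (w : ℕ → ℕ) : ℝ := ⨆ j : ℕ, Bhat (shift j w)

/-- The sequence `A_i` in the β-expansion of `β`: `A_0 = β`, `A_{i+1} = β (A_i - ⌊A_i⌋)`. -/
noncomputable def betaA (β : ℝ) : ℕ → ℝ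
  | 0 => β
  | i + 1 => β * (betaA β i - (⌊betaA β i⌋₊ : ℝ))

/-- The β-expansion of `β`: the word `a` with `a_i = ⌊A_i⌋`. -/
noncomputable def betaExp (β : ℝ) : ℕ → ℕ := fun i => ⌊betaA β i⌋₊

/-- The domain `W(β)` of the β-shift: all words `w` with `σ^k w < a` lexicographically
for every `k ≥ 0`, where `a` is the β-expansion of `β`. -/
def Wset (β : ℝ) : Set (ℕ → ℕ) :=
  {w | IsWord w ∧ ∀ k : ℕ, LexLt (shift k w) (betaExp β)}

/-- `π` is a permutation of `{1, …, n}` (viewed as a map `ℕ → ℕ`). -/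
def IsPerm (n : ℕ) (π : ℕ → ℕ) : Prop := Set.BijOn π (Set.Icc 1 n) (Set.Icc 1 n)

/-- The word `w` induces the permutation `π` of `{1, …, n}`: for all `1 ≤ i, j ≤ n`,
`π(i) < π(j)` iff `σ^{i-1} w < σ^{j-1} w` lexicographically. -/
def Induces (n : ℕ) (w : ℕ → ℕ) (π : ℕ → ℕ) : Prop :=
  ∀ i ∈ Set.Icc 1 n, ∀ j ∈ Set.Icc 1 n,
    (π i < π j ↔ LexLt (shift (i - 1) w) (shift (j - 1) w))

/-- `π ∈ Al(Σ_β)`: some word in `W(β)` induces `π`. -/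
def Allowed (β : ℝ) (n : ℕ) (π : ℕ → ℕ) : Prop := ∃ w ∈ Wset β, Induces n w π

/-- The shift-complexity `B(π) = inf {β > 1 : π ∈ Al(Σ_β)}`. -/
noncomputable def Bperm (n : ℕ) (π : ℕ → ℕ) : ℝ :=
  sInf {β : ℝ | 1 < β ∧ Allowed β n π}

/-- `ρ_m` is the permutation `1 m 2 (m-1) 3 (m-2) …` of `{1, …, m}`:
`ρ(2i-1) = i` and `ρ(2i) = m+1-i`. -/
def IsRho (m : ℕ) (ρ : ℕ → ℕ) : Prop :=
  IsPerm m ρ ∧ (∀ i, 1 ≤ i → 2 * i - 1 ≤ m → ρ (2 * i - 1) = i) ∧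
    (∀ i, 1 ≤ i → 2 * i ≤ m → ρ (2 * i) = m + 1 - i)

lemma shift_shift (a b : ℕ) (w : ℕ → ℕ) : shift a (shift b w) = shift (a + b) w := by
  funext i; simp [shift, Nat.add_assoc]

lemma isWord_shift {w : ℕ → ℕ} (h : IsWord w) (k : ℕ) : IsWord (shift k w) := by
  obtain ⟨M, hM⟩ := h; exact ⟨M, fun i => hM _⟩

lemma summable_geom_aux {β : ℝ} (hβ : 1 < β) :
    Summable (fun i : ℕ => (1 / β) ^ (i + 1)) := by
  have hβ0 : (0:ℝ) < β := lt_trans one_pos hβ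
  exact (summable_geometric_of_lt_one (by positivity) (by
    rw [div_lt_one hβ0]; exact hβ)).comp_injective (add_left_injective 1)

lemma term_le {w : ℕ → ℕ} {M : ℕ} (hM : ∀ i, w i ≤ M) {β : ℝ} (hβ : 1 < β) (i : ℕ) :
    (w i : ℝ) / β ^ (i + 1) ≤ (M : ℝ) * (1 / β) ^ (i + 1) := by
  have hβ0 : (0:ℝ) < β := lt_trans one_pos hβ
  rw [div_pow, one_pow, mul_one_div]
  apply div_le_div_of_nonneg_right _ (by positivity)
  exact_mod_cast hM i

lemma summable_word {w : ℕ → ℕ} {M : ℕ} (hM : ∀ i, w i ≤ M) {β : ℝ} (hβ : 1 < β) :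
    Summable (fun i : ℕ => (w i : ℝ) / β ^ (i + 1)) := by
  have hβ0 : (0:ℝ) < β := lt_trans one_pos hβ
  exact Summable.of_nonneg_of_le (fun i => by positivity) (term_le hM hβ)
    ((summable_geom_aux hβ).mul_left _)

lemma fword_nonneg {w : ℕ → ℕ} {β : ℝ} (hβ : 0 < β) : 0 ≤ fword w β :=
  tsum_nonneg (fun i => by positivity)

lemma tsum_geom_aux {β : ℝ} (hβ : 1 < β) :
    ∑' i : ℕ, ((1:ℝ)/β) ^ (i + 1) = 1 / (β - 1) := by
  have hβ0 : (0:ℝ) < β := lt_trans one_pos hβ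
  have h1 : ∑' i : ℕ, ((1:ℝ)/β) ^ (i + 1) = (1/β) * ∑' i : ℕ, ((1:ℝ)/β) ^ i := by
    rw [← tsum_mul_left]; congr 1; funext i; rw [pow_succ, mul_comm]
  rw [h1, tsum_geometric_of_lt_one (by positivity) (by rw [div_lt_one hβ0]; exact hβ)]
  rw [one_div, one_div, ← mul_inv]
  congr 1
  field_simp

lemma fword_le_geom {w : ℕ → ℕ} {M : ℕ} (hM : ∀ i, w i ≤ M) {β : ℝ} (hβ : 1 < β) :
    fword w β ≤ M / (β - 1) := by
  have h1 : fword w β ≤ ∑' i : ℕ, (M : ℝ) * (1/β) ^ (i + 1) :=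
    Summable.tsum_le_tsum (term_le hM hβ) (summable_word hM hβ) ((summable_geom_aux hβ).mul_left _)
  rw [tsum_mul_left, tsum_geom_aux hβ, mul_one_div] at h1
  exact h1

lemma fword_split {w : ℕ → ℕ} {M : ℕ} (hM : ∀ i, w i ≤ M) {β : ℝ} (hβ : 1 < β) (N : ℕ) :
    fword w β = (∑ j ∈ Finset.range N, (w j : ℝ) / β ^ (j + 1)) + fword (shift N w) β / β ^ N := by
  have hβ0 : (0:ℝ) < β := lt_trans one_pos hβ
  have hs := summable_word hM hβ
  rw [fword, ← Summable.sum_add_tsum_nat_add N hs]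
  congr 1
  rw [fword, ← tsum_div_const]
  congr 1; funext i
  rw [shift, div_div, ← pow_add]
  congr 2
  omega

lemma fword_anti {w : ℕ → ℕ} {M : ℕ} (hM : ∀ i, w i ≤ M) {β₁ β₂ : ℝ} (h1 : 1 < β₁)
    (h12 : β₁ ≤ β₂) : fword w β₂ ≤ fword w β₁ := by
  have h2 : 1 < β₂ := lt_of_lt_of_le h1 h12
  apply Summable.tsum_le_tsum _ (summable_word hM h2) (summable_word hM h1)
  intro i
  apply div_le_div_of_nonneg_left (by positivity) (by positivity)
  exact pow_le_pow_left₀ (by linarith) h12 _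

lemma fword_strict_anti {w : ℕ → ℕ} {M : ℕ} (hM : ∀ i, w i ≤ M) (hw : w ≠ fun _ => 0)
    {β₁ β₂ : ℝ} (h1 : 1 < β₁) (h12 : β₁ < β₂) : fword w β₂ < fword w β₁ := by
  have h2 : 1 < β₂ := lt_trans h1 h12
  obtain ⟨i0, hi0⟩ : ∃ i, w i ≠ 0 := by
    by_contra h; push_neg at h; exact hw (funext h)
  apply Summable.tsum_lt_tsum (i := i0) _ _ (summable_word hM h2) (summable_word hM h1)
  · intro i
    apply div_le_div_of_nonneg_left (by positivity) (by positivity)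
    exact pow_le_pow_left₀ (by linarith) h12.le _
  · apply div_lt_div_of_pos_left _ (by positivity) _
    · exact_mod_cast Nat.pos_of_ne_zero hi0
    · exact pow_lt_pow_left₀ h12 (by linarith) (by omega)

lemma betaA_nonneg {β : ℝ} (hβ : 1 < β) (i : ℕ) : 0 ≤ betaA β i := by
  induction i with
  | zero => simp [betaA]; linarith
  | succ n ih =>
    rw [betaA]
    have := Nat.floor_le ih
    nlinarith

lemma betaA_le {β : ℝ} (hβ : 1 < β) (i : ℕ) : betaA β i ≤ β := by
  cases i with
  | zero => simp [betaA]
  | succ n =>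
    rw [betaA]
    have h1 := betaA_nonneg hβ n
    have h2 := Nat.lt_floor_add_one (betaA β n)
    nlinarith

lemma betaExp_le {β : ℝ} (hβ : 1 < β) (i : ℕ) : betaExp β i ≤ ⌊β⌋₊ :=
  Nat.floor_le_floor (betaA_le hβ i)

lemma betaExp_zero_pos {β : ℝ} (hβ : 1 < β) : 1 ≤ betaExp β 0 := by
  rw [betaExp]
  show 1 ≤ ⌊betaA β 0⌋₊
  rw [show betaA β 0 = β from rfl]
  exact Nat.le_floor (by exact_mod_cast hβ.le)

lemma betaExp_partial {β : ℝ} (hβ : 1 < β) (N : ℕ) :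
    (∑ j ∈ Finset.range N, (betaExp β j : ℝ) / β ^ (j + 1)) = 1 - betaA β N / β ^ (N + 1) := by
  have hβ0 : (0:ℝ) < β := lt_trans one_pos hβ
  induction N with
  | zero => simp [betaA, div_self (ne_of_gt hβ0)]
  | succ n ih =>
    rw [Finset.sum_range_succ, ih]
    rw [show betaA β (n+1) = β * (betaA β n - (⌊betaA β n⌋₊ : ℝ)) from rfl]
    have : (β:ℝ) ^ (n + 1 + 1) = β ^ (n+1) * β := by ring
    rw [this, betaExp]
    field_simp
    ring

lemma fword_betaExp {β : ℝ} (hβ : 1 < β) : fword (betaExp β) β = 1 := by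
  have hβ0 : (0:ℝ) < β := lt_trans one_pos hβ
  have hs := summable_word (betaExp_le hβ) hβ
  have h1 : Filter.Tendsto (fun N => ∑ j ∈ Finset.range N, (betaExp β j : ℝ) / β ^ (j + 1))
      Filter.atTop (nhds (fword (betaExp β) β)) := hs.hasSum.tendsto_sum_nat
  have h2 : Filter.Tendsto (fun N : ℕ => 1 - betaA β N / β ^ (N + 1)) Filter.atTop (nhds 1) := by
    have h3 : Filter.Tendsto (fun N : ℕ => betaA β N / β ^ (N + 1)) Filter.atTop (nhds 0) := by
      apply squeeze_zero (fun N => div_nonneg (betaA_nonneg hβ N) (by positivity)) (fun N => ?_)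
        (g := fun N : ℕ => β / β ^ (N + 1))
      · have := tendsto_pow_atTop_nhds_zero_of_lt_one (le_of_lt (by positivity : (0:ℝ) < 1/β))
          (by rw [div_lt_one hβ0]; exact hβ)
        have h4 : (fun N : ℕ => β / β ^ (N + 1)) = fun N : ℕ => β * β⁻¹ * (1/β) ^ N * 1 := by
          funext N; field_simp; rw [one_div_pow]; field_simp; ring
        rw [h4]
        simpa using ((this.const_mul (β * β⁻¹)).mul_const 1)
      · exact div_le_div_of_nonneg_right (betaA_le hβ N) (by positivity)
    simpa using (tendsto_const_nhds.sub h3)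
  have := tendsto_nhds_unique h1 (by simpa only [betaExp_partial hβ] using h2 : Filter.Tendsto
    (fun N => ∑ j ∈ Finset.range N, (betaExp β j : ℝ) / β ^ (j + 1)) Filter.atTop (nhds 1))
  exact this

lemma lex_trichotomy (v w : ℕ → ℕ) : v = w ∨ LexLt v w ∨ LexLt w v := by
  by_cases h : v = w
  · exact Or.inl h
  right
  have hne : ∃ i, v i ≠ w i := by
    by_contra hc; push_neg at hc; exact h (funext hc)
  classical
  let i := Nat.find hne
  have hi : v i ≠ w i := Nat.find_spec hne
  have hpre : ∀ j < i, v j = w j := fun j hj => by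
    by_contra hc; exact absurd hj (not_lt.2 (Nat.find_le hc))
  rcases lt_or_gt_of_ne hi with h1 | h1
  · exact Or.inl ⟨i, hpre, h1⟩
  · exact Or.inr ⟨i, fun j hj => (hpre j hj).symm, h1⟩

lemma lexLt_irrefl (w : ℕ → ℕ) : ¬ LexLt w w := by
  rintro ⟨i, -, hi⟩; exact lt_irrefl _ hi

lemma fword_zero {β : ℝ} : fword (fun _ => 0) β = 0 := by
  simp [fword]

lemma mem_S_big {w : ℕ → ℕ} {M : ℕ} (hM : ∀ i, w i ≤ M) :
    (M : ℝ) + 2 ∈ {β : ℝ | 1 < β ∧ fword w β ≤ 1} := by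
  constructor
  · have : (0:ℝ) ≤ M := Nat.cast_nonneg M
    linarith
  · have h1 : (1:ℝ) < (M:ℝ) + 2 := by
      have : (0:ℝ) ≤ M := Nat.cast_nonneg M
      linarith
    refine (fword_le_geom hM h1).trans ?_
    rw [div_le_one (by linarith)]
    linarith

lemma Bhat_le {w : ℕ → ℕ} {γ : ℝ} (hγ : 1 < γ) (hf : fword w γ ≤ 1) : Bhat w ≤ γ := by
  rw [Bhat]
  split
  · linarith
  · exact csInf_le ⟨1, fun x hx => hx.1.le⟩ ⟨hγ, hf⟩

lemma one_le_Bhat {w : ℕ → ℕ} {M : ℕ} (hM : ∀ i, w i ≤ M) (hw : w ≠ fun _ => 0) :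
    1 ≤ Bhat w := by
  rw [Bhat, if_neg hw]
  exact le_csInf ⟨_, mem_S_big hM⟩ (fun x hx => hx.1.le)

lemma Bhat_le_bound {w : ℕ → ℕ} {M : ℕ} (hM : ∀ i, w i ≤ M) : Bhat w ≤ (M:ℝ) + 2 := by
  rw [Bhat]
  split
  · positivity
  · exact csInf_le ⟨1, fun x hx => hx.1.le⟩ (mem_S_big hM)

lemma fword_le_one_of_Bhat_le {w : ℕ → ℕ} {M : ℕ} (hM : ∀ i, w i ≤ M) {β : ℝ}
    (hβ : 1 < β) (h : Bhat w ≤ β) : fword w β ≤ 1 := by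
  by_cases hw : w = fun _ => 0
  · rw [hw, fword_zero]; norm_num
  rw [Bhat, if_neg hw] at h
  have hβ0 : (0:ℝ) < β := lt_trans one_pos hβ
  -- every β' > β satisfies fword w β' ≤ 1
  have key : ∀ β' : ℝ, β < β' → fword w β' ≤ 1 := by
    intro β' hβ'
    have hlt : sInf {b : ℝ | 1 < b ∧ fword w b ≤ 1} < β' := lt_of_le_of_lt h hβ'
    obtain ⟨γ, hγS, hγlt⟩ := (csInf_lt_iff ⟨1, fun x hx => hx.1.le⟩ ⟨_, mem_S_big hM⟩).1 hlt
    exact (fword_anti hM hγS.1 hγlt.le).trans hγS.2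
  -- partial sums at β are ≤ 1
  have partial_le : ∀ N : ℕ, (∑ j ∈ Finset.range N, (w j : ℝ) / β ^ (j + 1)) ≤ 1 := by
    intro N
    have hcont : ContinuousAt (fun x : ℝ => ∑ j ∈ Finset.range N, (w j : ℝ) / x ^ (j + 1)) β := by
      exact tendsto_finset_sum _ fun j _ =>
        continuousAt_const.div (continuousAt_pow _ _) (by positivity)
    have htend := hcont.tendsto.mono_left (nhdsWithin_le_nhds (s := Set.Ioi β))
    refine le_of_tendsto htend ?_
    apply eventually_nhdsWithin_of_forall
    intro x hx
    have hx1 : 1 < x := lt_trans hβ hx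
    calc (∑ j ∈ Finset.range N, (w j : ℝ) / x ^ (j + 1))
        ≤ fword w x := Summable.sum_le_tsum _ (fun i _ => by positivity) (summable_word hM hx1)
      _ ≤ 1 := key x hx
  exact Real.tsum_le_of_sum_range_le (fun i => by positivity) partial_le

/-- Key lemma B: if `fword w' β ≤ 1` then `betaExp β` is not lex-below `w'`. -/
lemma keyB {β : ℝ} (hβ : 1 < β) {w' : ℕ → ℕ} {M : ℕ} (hM : ∀ i, w' i ≤ M)
    (hf : fword w' β ≤ 1) (h : LexLt (betaExp β) w') : False := by
  have hβ0 : (0:ℝ) < β := lt_trans one_pos hβ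
  obtain ⟨i, hpre, hlt⟩ := h
  have hsplit := fword_split hM hβ (i + 1)
  have hsum : (∑ j ∈ Finset.range (i+1), (w' j : ℝ) / β ^ (j + 1))
      = (1 - betaA β i / β ^ (i + 1)) + (w' i : ℝ) / β ^ (i + 1) := by
    rw [Finset.sum_range_succ, ← betaExp_partial hβ i]
    congr 1
    apply Finset.sum_congr rfl
    intro j hj
    rw [hpre j (Finset.mem_range.1 hj)]
  have htail : 0 ≤ fword (shift (i+1) w') β / β ^ (i+1) := by
    have := fword_nonneg (w := shift (i+1) w') hβ0
    positivity
  have hAi : betaA β i < (w' i : ℝ) := by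
    have h1 : betaA β i < (⌊betaA β i⌋₊ : ℝ) + 1 := Nat.lt_floor_add_one _
    have h2 : (betaExp β i : ℝ) + 1 ≤ (w' i : ℝ) := by exact_mod_cast hlt
    rw [betaExp] at h2
    linarith
  have hpow : (0:ℝ) < β ^ (i + 1) := by positivity
  rw [hsplit, hsum] at hf
  have : (w' i : ℝ) / β ^ (i+1) ≤ betaA β i / β ^ (i+1) := by linarith
  have := (div_le_div_iff_of_pos_right hpow).1 this
  linarith

/-- Key lemma A: if all shifts of `w` are lex-below `betaExp β`, then all their `fword`s ≤ 1. -/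
lemma keyA {β : ℝ} (hβ : 1 < β) {w : ℕ → ℕ} {M : ℕ} (hM : ∀ i, w i ≤ M)
    (hW : ∀ k : ℕ, LexLt (shift k w) (betaExp β)) (k : ℕ) : fword (shift k w) β ≤ 1 := by
  have hβ0 : (0:ℝ) < β := lt_trans one_pos hβ
  have hMs : ∀ k i, (shift k w) i ≤ M := fun k i => hM _
  have hbdd : BddAbove (Set.range fun k => fword (shift k w) β) := by
    refine ⟨M / (β - 1), ?_⟩
    rintro x ⟨k, rfl⟩
    exact fword_le_geom (hMs k) hβ
  set C := ⨆ k : ℕ, fword (shift k w) β with hC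
  have hCle : ∀ k, fword (shift k w) β ≤ C := fun k => le_ciSup hbdd k
  -- the key estimate
  have hest : ∀ k : ℕ, ∃ i : ℕ, fword (shift k w) β ≤ 1 + (C - 1) / β ^ (i + 1) := by
    intro k
    obtain ⟨i, hpre, hlt⟩ := hW k
    refine ⟨i, ?_⟩
    have hsplit := fword_split (hMs k) hβ (i + 1)
    have hsum : (∑ j ∈ Finset.range (i+1), ((shift k w) j : ℝ) / β ^ (j + 1))
        = (1 - betaA β i / β ^ (i + 1)) + ((shift k w) i : ℝ) / β ^ (i + 1) := by
      rw [Finset.sum_range_succ, ← betaExp_partial hβ i]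
      congr 1
      apply Finset.sum_congr rfl
      intro j hj
      rw [hpre j (Finset.mem_range.1 hj)]
    have htail : fword (shift (i+1) (shift k w)) β ≤ C := by
      rw [shift_shift]; exact hCle _
    have hdig : ((shift k w) i : ℝ) + 1 ≤ betaA β i := by
      have h2 : ((shift k w) i : ℝ) + 1 ≤ (betaExp β i : ℝ) := by exact_mod_cast hlt
      have h3 : ((betaExp β i : ℕ) : ℝ) ≤ betaA β i := by
        rw [betaExp]; exact Nat.floor_le (betaA_nonneg hβ i)
      linarith
    have hpow : (0:ℝ) < β ^ (i + 1) := by positivity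
    rw [hsplit, hsum]
    have h4 : ((shift k w) i : ℝ) / β ^ (i+1) ≤ (betaA β i - 1) / β ^ (i+1) := by
      gcongr <;> linarith
    have h5 : fword (shift (i+1) (shift k w)) β / β ^ (i+1) ≤ C / β ^ (i+1) := by
      gcongr
    have expand : (1 - betaA β i / β ^ (i + 1)) + (betaA β i - 1) / β ^ (i+1) + C / β^(i+1)
        = 1 + (C - 1) / β ^ (i+1) := by field_simp; ring
    calc (1 - betaA β i / β ^ (i + 1)) + ((shift k w) i : ℝ) / β ^ (i + 1)
          + fword (shift (i+1) (shift k w)) β / β ^ (i+1)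
        ≤ (1 - betaA β i / β ^ (i + 1)) + (betaA β i - 1) / β ^ (i+1) + C / β^(i+1) := by
          linarith
      _ = 1 + (C - 1) / β ^ (i+1) := expand
  -- conclude C ≤ 1
  have hC1 : C ≤ 1 := by
    by_contra hc
    push_neg at hc
    have hub : ∀ k : ℕ, fword (shift k w) β ≤ 1 + (C - 1) / β := by
      intro k
      obtain ⟨i, hi⟩ := hest k
      refine hi.trans ?_
      have h1 : β ≤ β ^ (i + 1) := by
        calc β = β ^ 1 := (pow_one β).symm
          _ ≤ β ^ (i + 1) := pow_le_pow_right₀ hβ.le (by omega)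
      have h2 : (C - 1) / β ^ (i+1) ≤ (C - 1) / β := by
        gcongr <;> linarith
      linarith
    have hCle2 : C ≤ 1 + (C - 1) / β := ciSup_le hub
    have h6 : (C - 1) / β < C - 1 := div_lt_self (by linarith) hβ
    linarith
  exact (hCle k).trans hC1

lemma shift_zero (w : ℕ → ℕ) : shift 0 w = w := by funext i; simp [shift]

lemma Bhat_bdd {w : ℕ → ℕ} {M : ℕ} (hM : ∀ i, w i ≤ M) :
    BddAbove (Set.range fun j : ℕ => Bhat (shift j w)) := by
  refine ⟨(M:ℝ) + 2, ?_⟩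
  rintro x ⟨j, rfl⟩
  exact Bhat_le_bound (fun i => hM _)

lemma Bhat_le_Bbar {w : ℕ → ℕ} {M : ℕ} (hM : ∀ i, w i ≤ M) (j : ℕ) :
    Bhat (shift j w) ≤ Bbar w := le_ciSup (Bhat_bdd hM) j

lemma one_le_Bbar {w : ℕ → ℕ} {M : ℕ} (hM : ∀ i, w i ≤ M) (hw : w ≠ fun _ => 0) :
    1 ≤ Bbar w := by
  refine le_trans ?_ (Bhat_le_Bbar hM 0)
  rw [shift_zero]
  exact one_le_Bhat hM hw

/-- Claim 1: the characterization of `Wset β`. -/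
lemma claim1 {β : ℝ} (hβ : 1 < β) :
    Wset β = {w | IsWord w ∧ Bbar w ≤ β ∧ ∀ k : ℕ, shift k w ≠ betaExp β} := by
  ext w
  constructor
  · rintro ⟨hword, hW⟩
    obtain ⟨M, hM⟩ := hword
    refine ⟨⟨M, hM⟩, ?_, ?_⟩
    · exact ciSup_le fun j => Bhat_le hβ (keyA hβ hM hW j)
    · intro k hk
      exact lexLt_irrefl (betaExp β) (hk ▸ hW k)
  · rintro ⟨hword, hBbar, hne⟩
    obtain ⟨M, hM⟩ := hword
    refine ⟨⟨M, hM⟩, fun k => ?_⟩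
    have h1 : Bhat (shift k w) ≤ β := le_trans (Bhat_le_Bbar hM k) hBbar
    have h2 : fword (shift k w) β ≤ 1 :=
      fword_le_one_of_Bhat_le (fun i => hM _) hβ h1
    rcases lex_trichotomy (shift k w) (betaExp β) with h | h | h
    · exact absurd h (hne k)
    · exact h
    · exact absurd h (fun h => keyB hβ (fun i => hM _) h2 h)

lemma betaExp_inj_aux {β₁ β₂ : ℝ} (h1 : 1 < β₁) (h2 : 1 < β₂) (h : betaExp β₁ = betaExp β₂)
    (hlt : β₁ < β₂) : False := by
  have hnz : betaExp β₁ ≠ fun _ => 0 := by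
    intro hz
    have := betaExp_zero_pos h1
    rw [hz] at this
    simp at this
  have hMa := betaExp_le h1
  have hf1 : fword (betaExp β₁) β₁ = 1 := fword_betaExp h1
  have hf2 : fword (betaExp β₁) β₂ = 1 := by rw [h]; exact fword_betaExp h2
  have := fword_strict_anti hMa hnz h1 hlt
  rw [hf1, hf2] at this
  exact lt_irrefl _ this

lemma betaExp_inj {β₁ β₂ : ℝ} (h1 : 1 < β₁) (h2 : 1 < β₂) (h : betaExp β₁ = betaExp β₂) :
    β₁ = β₂ := by
  rcases lt_trichotomy β₁ β₂ with h' | h' | h'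
  · exact absurd (betaExp_inj_aux h1 h2 h h') not_false
  · exact h'
  · exact absurd (betaExp_inj_aux h2 h1 h.symm h') not_false

/-- Claim 2: for a nonzero word, `Bbar w` is the infimum of admissible bases. -/
lemma claim2 {w : ℕ → ℕ} (hword : IsWord w) (hw : w ≠ fun _ => 0) :
    Bbar w = sInf {β' : ℝ | 1 < β' ∧ w ∈ Wset β'} := by
  obtain ⟨M, hM⟩ := hword
  set b := Bbar w with hb
  have hb1 : 1 ≤ b := one_le_Bbar hM hw
  set T := {β' : ℝ | 1 < β' ∧ w ∈ Wset β'} with hT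
  have hbmem : ∀ x ∈ T, b ≤ x := by
    rintro x ⟨hx1, hxW⟩
    rw [claim1 hx1] at hxW
    exact hxW.2.1
  -- the "bad" set is countable
  set Bad := {β' : ℝ | 1 < β' ∧ ∃ k : ℕ, shift k w = betaExp β'} with hBad
  have hBadC : Bad.Countable := by
    rw [Set.countable_iff_exists_injective]
    classical
    refine ⟨fun x => Nat.find x.2.2, ?_⟩
    intro x y hxy
    have hk : Nat.find x.2.2 = Nat.find y.2.2 := hxy
    have hx := Nat.find_spec x.2.2
    have hy := Nat.find_spec y.2.2
    have : betaExp (x:ℝ) = betaExp (y:ℝ) := by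
      rw [← hx, ← hy]
      exact congrArg (fun n => shift n w) hk
    exact Subtype.ext (betaExp_inj x.2.1 y.2.1 this)
  -- density: for each ε > 0 there is x ∈ T with x < b + ε
  have hdense : ∀ ε : ℝ, 0 < ε → ∃ x ∈ T, x < b + ε := by
    intro ε hε
    have hunc : ¬ (Set.Ioo b (b + ε)).Countable := by
      intro hc
      have h1 : Cardinal.mk (Set.Ioo b (b + ε)) = Cardinal.continuum :=
        Cardinal.mk_Ioo_real (by linarith)
      have h2 := hc.le_aleph0
      rw [h1] at h2
      exact absurd h2 (not_le.2 Cardinal.aleph0_lt_continuum)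
    have hne : ¬ (Set.Ioo b (b + ε) ⊆ Bad) := fun hs => hunc (hBadC.mono hs)
    obtain ⟨x, hxI, hxB⟩ := Set.not_subset.1 hne
    have hx1 : 1 < x := lt_of_le_of_lt hb1 hxI.1
    refine ⟨x, ⟨hx1, ?_⟩, hxI.2⟩
    rw [claim1 hx1]
    refine ⟨⟨M, hM⟩, le_of_lt hxI.1, ?_⟩
    intro k hk
    exact hxB ⟨hx1, k, hk⟩
  have hTne : T.Nonempty := by
    obtain ⟨x, hx, -⟩ := hdense 1 one_pos
    exact ⟨x, hx⟩
  refine le_antisymm (le_csInf hTne hbmem) ?_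
  apply le_of_forall_pos_le_add
  intro ε hε
  obtain ⟨x, hxT, hxlt⟩ := hdense ε hε
  exact (csInf_le ⟨1, fun y hy => hy.1.le⟩ hxT).trans hxlt.le

/-- Let `β > 1` and let `a` be the β-expansion of `β`. Then `W(β)` is exactly
the set of words `w` with `B̄(w) ≤ β` and `σ^k w ≠ a` for all `k ≥ 0`. Moreover, for every
word `w` that is not identically zero, `B̄(w) = inf {β > 1 : w ∈ W(β)}`. -/
theorem stmt_12 (β : ℝ) (hβ : 1 < β) :
    Wset β = {w | IsWord w ∧ Bbar w ≤ β ∧ ∀ k : ℕ, shift k w ≠ betaExp β} ∧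
      (∀ w : ℕ → ℕ, IsWord w → w ≠ (fun _ => 0) →
        Bbar w = sInf {β' : ℝ | 1 < β' ∧ w ∈ Wset β'}) := by
  exact ⟨claim1 hβ, fun w hw hnz => claim2 hw hnz⟩
end

section
/- For every bounded sequence w : ℕ → ℕ that is not identically zero, there exists a unique real number β ≥ 1 such that the series ∑_{i≥0} w_i β^{−(i+1)} is summable with sum equal to 1. -/
lemma aux_summable (w : ℕ → ℕ) (M : ℕ) (hM : ∀ i, w i ≤ M) {β : ℝ} (hβ : 1 < β) :
    Summable (fun i : ℕ => (w i : ℝ) / β ^ (i + 1)) := by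
  have hβ0 : (0:ℝ) < β := lt_trans one_pos hβ
  have hr0 : (0:ℝ) ≤ β⁻¹ := inv_nonneg.2 hβ0.le
  have hr1 : β⁻¹ < 1 := inv_lt_one_of_one_lt₀ hβ
  have hgeo : Summable (fun i : ℕ => (M:ℝ) * (β⁻¹ ^ i * β⁻¹)) :=
    ((summable_geometric_of_lt_one hr0 hr1).mul_right β⁻¹).mul_left (M:ℝ)
  apply Summable.of_nonneg_of_le (fun i => by positivity) _ hgeo
  intro i
  have : (w i : ℝ) / β ^ (i+1) = (w i : ℝ) * (β⁻¹ ^ i * β⁻¹) := by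
    rw [div_eq_mul_inv, ← inv_pow, pow_succ]
  rw [this]
  exact mul_le_mul_of_nonneg_right (by exact_mod_cast hM i) (by positivity)

lemma aux_key (w : ℕ → ℕ) (M : ℕ) (hM : ∀ i, w i ≤ M) (hM1 : 1 ≤ M)
    (hle : ∑' i : ℕ, (w i : ℝ) / ((M:ℝ)+1) ^ (i + 1) ≤ 1)
    (β0 : ℝ) (hβ01 : 1 < β0) (hgt : 1 < ∑' i : ℕ, (w i : ℝ) / β0 ^ (i + 1)) :
    ∃ β : ℝ, 1 ≤ β ∧ Summable (fun i : ℕ => (w i : ℝ) / β ^ (i + 1)) ∧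
      ∑' i : ℕ, (w i : ℝ) / β ^ (i + 1) = 1 := by
  set f : ℝ → ℝ := fun x => ∑' i : ℕ, (w i : ℝ) / x ^ (i + 1) with hf
  set b : ℝ := (M:ℝ) + 1 with hb
  have hMpos : (0:ℝ) < M := by exact_mod_cast hM1
  have hb1 : (1:ℝ) < b := by rw [hb]; linarith
  have hβ00 : (0:ℝ) < β0 := lt_trans one_pos hβ01
  -- β0 ≤ b
  have hβ0b : β0 ≤ b := by
    by_contra h
    push_neg at h
    have hmono : f β0 ≤ f b := by
      apply Summable.tsum_le_tsum _ (aux_summable w M hM (lt_trans hb1 h)) (aux_summable w M hM hb1)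
      intro i
      gcongr
    have : (1:ℝ) < 1 := lt_of_lt_of_le hgt (le_trans hmono hle)
    exact absurd this (lt_irrefl 1)
  -- continuity on Icc β0 b
  have hcont : ContinuousOn f (Set.Icc β0 b) := by
    apply continuousOn_tsum (u := fun i : ℕ => (M:ℝ) * (β0⁻¹ ^ i * β0⁻¹))
    · intro i
      apply ContinuousOn.div continuousOn_const (by fun_prop)
      intro x hx
      have : (0:ℝ) < x := lt_of_lt_of_le hβ00 hx.1
      positivity
    · exact ((summable_geometric_of_lt_one (inv_nonneg.2 hβ00.le)
        (inv_lt_one_of_one_lt₀ hβ01)).mul_right β0⁻¹).mul_left (M:ℝ)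
    · intro i x hx
      have hx0 : (0:ℝ) < x := lt_of_lt_of_le hβ00 hx.1
      rw [Real.norm_eq_abs, abs_of_nonneg (by positivity)]
      have h1 : (w i : ℝ) / x ^ (i+1) ≤ (M:ℝ) / β0 ^ (i+1) := by
        gcongr
        · exact_mod_cast hM i
        · exact hx.1
      calc (w i : ℝ) / x ^ (i+1) ≤ (M:ℝ) / β0 ^ (i+1) := h1
      _ = (M:ℝ) * (β0⁻¹ ^ i * β0⁻¹) := by
          rw [div_eq_mul_inv, ← inv_pow, pow_succ]
  have hmem : (1:ℝ) ∈ Set.Icc (f b) (f β0) := ⟨hle, hgt.le⟩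
  obtain ⟨β, hβmem, hfβ⟩ := intermediate_value_Icc' hβ0b hcont hmem
  have hβ1 : 1 < β := lt_of_lt_of_le hβ01 hβmem.1
  exact ⟨β, hβ1.le, aux_summable w M hM hβ1, hfβ⟩

lemma aux_le_one (w : ℕ → ℕ) (M : ℕ) (hM : ∀ i, w i ≤ M) (hM1 : 1 ≤ M) :
    ∑' i : ℕ, (w i : ℝ) / ((M:ℝ)+1) ^ (i + 1) ≤ 1 := by
  have hMpos : (0:ℝ) < M := by exact_mod_cast hM1
  set b : ℝ := (M:ℝ) + 1 with hb
  have hb1 : (1:ℝ) < b := by simp [hb]; positivity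
  have hb0 : (0:ℝ) < b := lt_trans one_pos hb1
  set r : ℝ := b⁻¹ with hrdef
  have hr0 : (0:ℝ) ≤ r := inv_nonneg.2 hb0.le
  have hr1 : r < 1 := inv_lt_one_of_one_lt₀ hb1
  have hgeo : Summable (fun i : ℕ => (M:ℝ) * (r ^ i * r)) :=
    ((summable_geometric_of_lt_one hr0 hr1).mul_right r).mul_left (M:ℝ)
  have hsum : Summable (fun i : ℕ => (w i : ℝ) / b ^ (i + 1)) := aux_summable w M hM hb1
  have h1 : ∑' i : ℕ, (w i : ℝ) / b ^ (i + 1) ≤ ∑' i : ℕ, (M:ℝ) * (r ^ i * r) := by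
    apply Summable.tsum_le_tsum _ hsum hgeo
    intro i
    have : (w i : ℝ) / b ^ (i+1) = (w i : ℝ) * (r ^ i * r) := by
      rw [div_eq_mul_inv, ← inv_pow, pow_succ, hrdef]
    rw [this]
    exact mul_le_mul_of_nonneg_right (by exact_mod_cast hM i) (by positivity)
  have h2 : ∑' i : ℕ, (M:ℝ) * (r ^ i * r) = (M:ℝ) * ((1 - r)⁻¹ * r) := by
    rw [tsum_mul_left, tsum_mul_right, tsum_geometric_of_lt_one hr0 hr1]
  have h3 : (M:ℝ) * ((1 - r)⁻¹ * r) = 1 := by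
    rw [hrdef, hb]
    have : (1 : ℝ) - ((M:ℝ)+1)⁻¹ = (M:ℝ) / ((M:ℝ)+1) := by field_simp; ring
    rw [this]
    field_simp
  calc ∑' i : ℕ, (w i : ℝ) / b ^ (i + 1) ≤ _ := h1
  _ = 1 := by rw [h2, h3]


lemma aux_exists_gt (w : ℕ → ℕ) (M : ℕ) (hM : ∀ i, w i ≤ M) (N : ℕ)
    (hS : 2 ≤ ∑ i ∈ Finset.range N, (w i : ℝ)) :
    ∃ β : ℝ, 1 < β ∧ 1 < ∑' i : ℕ, (w i : ℝ) / β ^ (i + 1) := by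
  set S : ℝ := ∑ i ∈ Finset.range N, (w i : ℝ) with hSdef
  have hS0 : (0:ℝ) < S := lt_of_lt_of_le two_pos hS
  have hS1 : (1:ℝ) < S := lt_of_lt_of_le one_lt_two hS
  have hN : N ≠ 0 := by
    rintro rfl; simp [hSdef] at hS; linarith
  have hNpos : (0:ℝ) < (2 * N : ℝ) := by positivity
  set β : ℝ := S ^ ((2 * (N:ℝ))⁻¹ : ℝ) with hβdef
  have hβ1 : 1 < β := by
    rw [hβdef, Real.one_lt_rpow_iff_of_pos hS0]
    left
    constructor
    · exact hS1
    · positivity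
  have hβ0 : (0:ℝ) < β := lt_trans one_pos hβ1
  refine ⟨β, hβ1, ?_⟩
  -- β ^ N = S ^ (2⁻¹)
  have hpow : β ^ N = S ^ ((2:ℝ))⁻¹ := by
    rw [hβdef, ← Real.rpow_natCast (S ^ ((2 * (N:ℝ))⁻¹ : ℝ)) N, ← Real.rpow_mul hS0.le]
    congr 1
    field_simp
  have hroot1 : 1 < S ^ ((2:ℝ))⁻¹ := by
    rw [Real.one_lt_rpow_iff_of_pos hS0]; left; exact ⟨hS1, by norm_num⟩
  have hroot0 : (0:ℝ) < S ^ ((2:ℝ))⁻¹ := lt_trans one_pos hroot1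
  have hSdiv : S / S ^ ((2:ℝ))⁻¹ = S ^ ((2:ℝ))⁻¹ := by
    rw [div_eq_iff (ne_of_gt hroot0), ← Real.rpow_add hS0]
    norm_num
  -- summability
  have hsum : Summable (fun i : ℕ => (w i : ℝ) / β ^ (i + 1)) := by
    have hr0 : (0:ℝ) ≤ β⁻¹ := inv_nonneg.2 hβ0.le
    have hr1 : β⁻¹ < 1 := inv_lt_one_of_one_lt₀ hβ1
    have hgeo := (((summable_geometric_of_lt_one hr0 hr1).mul_right β⁻¹).mul_left (M:ℝ))
    apply Summable.of_nonneg_of_le (fun i => by positivity) _ hgeo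
    intro i
    have : (w i : ℝ) / β ^ (i+1) = (w i : ℝ) * (β⁻¹ ^ i * β⁻¹) := by
      rw [div_eq_mul_inv, ← inv_pow, pow_succ]
    rw [this]
    exact mul_le_mul_of_nonneg_right (by exact_mod_cast hM i) (by positivity)
  have hstep : S / β ^ N ≤ ∑ i ∈ Finset.range N, (w i : ℝ) / β ^ (i + 1) := by
    rw [hSdef, Finset.sum_div]
    apply Finset.sum_le_sum
    intro i hi
    have hiN : i + 1 ≤ N := Finset.mem_range.1 hi
    gcongr
    exact hβ1.le
  calc (1:ℝ) < S ^ ((2:ℝ))⁻¹ := hroot1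
  _ = S / β ^ N := by rw [hpow, hSdiv]
  _ ≤ ∑ i ∈ Finset.range N, (w i : ℝ) / β ^ (i + 1) := hstep
  _ ≤ ∑' i : ℕ, (w i : ℝ) / β ^ (i + 1) := Summable.sum_le_tsum _ (fun i _ => by positivity) hsum


lemma aux_uniq (w : ℕ → ℕ) (n : ℕ) (hn : w n ≠ 0) (β1 β2 : ℝ) (h1 : 1 ≤ β1)
    (hs1 : Summable (fun i : ℕ => (w i : ℝ) / β1 ^ (i + 1)))
    (ht1 : ∑' i : ℕ, (w i : ℝ) / β1 ^ (i + 1) = 1)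
    (hs2 : Summable (fun i : ℕ => (w i : ℝ) / β2 ^ (i + 1)))
    (ht2 : ∑' i : ℕ, (w i : ℝ) / β2 ^ (i + 1) = 1)
    (hlt : β1 < β2) : False := by
  have hβ10 : (0:ℝ) < β1 := lt_of_lt_of_le one_pos h1
  have hβ20 : (0:ℝ) < β2 := lt_trans hβ10 hlt
  have hle : ∀ i : ℕ, (w i : ℝ) / β2 ^ (i + 1) ≤ (w i : ℝ) / β1 ^ (i + 1) := by
    intro i
    gcongr
  have hwn : (0:ℝ) < (w n : ℝ) := by
    exact_mod_cast Nat.pos_of_ne_zero hn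
  have hstrict : (w n : ℝ) / β2 ^ (n + 1) < (w n : ℝ) / β1 ^ (n + 1) := by
    apply div_lt_div_of_pos_left hwn (by positivity)
    exact pow_lt_pow_left₀ hlt hβ10.le (Nat.succ_ne_zero n)
  have := Summable.tsum_lt_tsum hle hstrict hs2 hs1
  rw [ht1, ht2] at this
  exact absurd this (lt_irrefl 1)

/-- For every bounded sequence `w : ℕ → ℕ` that is not identically zero,
there is a unique real `β ≥ 1` such that `∑_{i≥0} w_i β^{-(i+1)}` is summable with sum 1. -/
theorem stmt_19 (w : ℕ → ℕ) (hw : IsWord w) (hw0 : w ≠ fun _ => 0) :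
    ∃! β : ℝ, 1 ≤ β ∧ Summable (fun i : ℕ => (w i : ℝ) / β ^ (i + 1)) ∧
      ∑' i : ℕ, (w i : ℝ) / β ^ (i + 1) = 1 := by
  obtain ⟨M0, hM0⟩ := hw
  set M : ℕ := max M0 1 with hMdef
  have hM : ∀ i, w i ≤ M := fun i => le_trans (hM0 i) (le_max_left _ _)
  have hM1 : 1 ≤ M := le_max_right _ _
  obtain ⟨n, hn⟩ : ∃ n, w n ≠ 0 := by
    by_contra h
    push_neg at h
    exact hw0 (funext h)
  have hkey : ∀ N : ℕ, 2 ≤ ∑ i ∈ Finset.range N, (w i : ℝ) →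
      ∃ β : ℝ, 1 ≤ β ∧ Summable (fun i : ℕ => (w i : ℝ) / β ^ (i + 1)) ∧
        ∑' i : ℕ, (w i : ℝ) / β ^ (i + 1) = 1 := by
    intro N hS
    obtain ⟨β0, hβ01, hβ0gt⟩ := aux_exists_gt w M hM N hS
    exact aux_key w M hM hM1 (aux_le_one w M hM hM1) β0 hβ01 hβ0gt
  have hexists : ∃ β : ℝ, 1 ≤ β ∧ Summable (fun i : ℕ => (w i : ℝ) / β ^ (i + 1)) ∧
      ∑' i : ℕ, (w i : ℝ) / β ^ (i + 1) = 1 := by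
    by_cases hsum : Summable (fun i : ℕ => (w i : ℝ))
    · have htend := hsum.tendsto_atTop_zero
      have hev : ∀ᶠ i : ℕ in Filter.atTop, (w i : ℝ) < 1 :=
        htend.eventually (gt_mem_nhds one_pos)
      obtain ⟨N, hN⟩ := Filter.eventually_atTop.1 hev
      have hN0 : ∀ i ≥ N, w i = 0 := by
        intro i hi
        have := hN i hi
        exact_mod_cast Nat.lt_one_iff.1 (by exact_mod_cast this)
      have hnN : n < N := by
        by_contra h
        exact hn (hN0 n (le_of_not_gt h))
      set S : ℕ := ∑ i ∈ Finset.range N, w i with hSdef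
      have hS1 : 1 ≤ S := by
        calc 1 ≤ w n := Nat.one_le_iff_ne_zero.2 hn
        _ ≤ S := Finset.single_le_sum (f := w) (fun i _ => Nat.zero_le _)
            (Finset.mem_range.2 hnN)
      rcases eq_or_lt_of_le hS1 with hS | hS
      · -- S = 1, take β = 1
        refine ⟨1, le_refl 1, ?_, ?_⟩
        · have : (fun i : ℕ => (w i : ℝ) / (1:ℝ) ^ (i + 1)) = fun i : ℕ => (w i : ℝ) := by
            funext i; simp
          rw [this]; exact hsum
        · have h1 : (fun i : ℕ => (w i : ℝ) / (1:ℝ) ^ (i + 1)) = fun i : ℕ => (w i : ℝ) := by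
            funext i; simp
          rw [h1, tsum_eq_sum (s := Finset.range N)
            (fun i hi => by simp [hN0 i (le_of_not_gt (fun h => hi (Finset.mem_range.2 h)))])]
          push_cast
          exact_mod_cast congrArg (fun k : ℕ => (k : ℝ)) hS.symm
      · apply hkey N
        have : (2:ℝ) ≤ (S:ℝ) := by exact_mod_cast hS
        calc (2:ℝ) ≤ (S:ℝ) := this
        _ = ∑ i ∈ Finset.range N, (w i : ℝ) := by rw [hSdef]; push_cast; ring
    · rw [not_summable_iff_tendsto_nat_atTop_of_nonneg
        (fun i => Nat.cast_nonneg (w i))] at hsum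
      obtain ⟨N, hN⟩ := (hsum.eventually_ge_atTop 2).exists
      exact hkey N hN
  obtain ⟨β, hβ1, hβs, hβt⟩ := hexists
  refine ⟨β, ⟨hβ1, hβs, hβt⟩, ?_⟩
  rintro y ⟨hy1, hys, hyt⟩
  rcases lt_trichotomy y β with h | h | h
  · exact absurd (aux_uniq w n hn y β hy1 hys hyt hβs hβt h) (fun x => x)
  · exact h
  · exact absurd (aux_uniq w n hn β y hβ1 hβs hβt hys hyt h) (fun x => x)
end
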